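/- arXiv:2605.29571 — 7 statements merged into one kernel-verified Lean document; each statement's English description precedes it below -/
import Mathlib

section
/- Fix an integer k ≥ 2 and disjoint finite sets A, B with |A| = |B| = 2k; let P = A ∪ B. Let S* ⊆ P satisfy |S* ∩ A| = k+1 and |S* ∩ B| = k−1. Suppose y' : P → ℝ is such that S* is the unique minimizer of y'(S) − v_{S*}(S) over all S ⊆ P. Then: (i) y'(p) − y'(q) > −1/6 for all q ∈ S* and p ∈ P \ S*, and (ii) y'(b) − y'(a) > 1/3 for all a ∈ A ∩ S* and b ∈ B \ S*. -/
/-- The game `v̄`: `v̄(S) = 2k + 1/2` if `|S| > 2k` or `|S∩A| = |S∩B| = k`, else `|S|`. -/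
noncomputable def vbar {U : Type*} [DecidableEq U] (k : ℕ) (A B : Finset U)
    (S : Finset U) : ℝ :=
  if 2 * k < S.card ∨ ((S ∩ A).card = k ∧ (S ∩ B).card = k) then (2 * k : ℝ) + 1 / 2
  else (S.card : ℝ)

/-- The game `v_{S*}`: equals `v̄` except `v_{S*}(S*) = 2k + 1/6`. -/
noncomputable def vS {U : Type*} [DecidableEq U] (k : ℕ) (A B Sstar : Finset U)
    (S : Finset U) : ℝ :=
  if S = Sstar then (2 * k : ℝ) + 1 / 6 else vbar k A B S

/-- If `S*` is the unique minimizer of the excess `y'(S) − v_{S*}(S)` over all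
coalitions `S ⊆ P`, then (i) `y'(p) − y'(q) > −1/6` for all `q ∈ S*`, `p ∈ P \ S*`, and
(ii) `y'(b) − y'(a) > 1/3` for all `a ∈ A ∩ S*`, `b ∈ B \ S*`. -/
theorem stmt5 {U : Type*} [DecidableEq U] (k : ℕ) (hk : 2 ≤ k)
    (A B : Finset U) (hAB : Disjoint A B) (hA : A.card = 2 * k) (hB : B.card = 2 * k)
    (P : Finset U) (hP : P = A ∪ B)
    (Sstar : Finset U) (hSsub : Sstar ⊆ P)
    (hSA : (Sstar ∩ A).card = k + 1) (hSB : (Sstar ∩ B).card = k - 1)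
    (y' : U → ℝ)
    (hmin : ∀ S ⊆ P, S ≠ Sstar →
      (∑ p ∈ Sstar, y' p) - vS k A B Sstar Sstar < (∑ p ∈ S, y' p) - vS k A B Sstar S) :
    (∀ q ∈ Sstar, ∀ p ∈ P \ Sstar, y' p - y' q > -(1 / 6)) ∧
    (∀ a ∈ A ∩ Sstar, ∀ b ∈ B \ Sstar, y' b - y' a > 1 / 3) := by
  have hScard : Sstar.card = 2 * k := by
    have h1 : Sstar = (Sstar ∩ A) ∪ (Sstar ∩ B) := by
      rw [← Finset.inter_union_distrib_left, ← hP, Finset.inter_eq_left.mpr hSsub]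
    have h2 : Disjoint (Sstar ∩ A) (Sstar ∩ B) :=
      (hAB.mono (Finset.inter_subset_right) (Finset.inter_subset_right))
    rw [h1, Finset.card_union_of_disjoint h2, hSA, hSB]
    omega
  have hvSstar : vS k A B Sstar Sstar = (2 * k : ℝ) + 1 / 6 := by simp [vS]
  constructor
  · intro q hq p hp
    rw [Finset.mem_sdiff] at hp
    set S : Finset U := insert p (Sstar.erase q) with hSdef
    have hpne : p ∉ Sstar.erase q := fun h => hp.2 (Finset.mem_of_mem_erase h)
    have hScard' : S.card = 2 * k := by
      rw [hSdef, Finset.card_insert_of_notMem hpne, Finset.card_erase_of_mem hq, hScard]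
      omega
    have hSsubP : S ⊆ P := by
      intro x hx
      rcases Finset.mem_insert.mp hx with h | h
      · exact h ▸ hp.1
      · exact hSsub (Finset.mem_of_mem_erase h)
    have hSne : S ≠ Sstar := fun h => hp.2 (h ▸ Finset.mem_insert_self p _)
    have hsum : (∑ x ∈ S, y' x) = y' p + ((∑ x ∈ Sstar, y' x) - y' q) := by
      rw [hSdef, Finset.sum_insert hpne, Finset.sum_erase_eq_sub hq]
    have hvS : vS k A B Sstar S ≥ (2 * k : ℝ) := by
      rw [vS, if_neg hSne, vbar]
      split
      · linarith
      · rw [hScard']; push_cast; linarith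
    have := hmin S hSsubP hSne
    rw [hvSstar, hsum] at this
    linarith
  · intro a ha b hb
    rw [Finset.mem_inter] at ha
    rw [Finset.mem_sdiff] at hb
    have haS : a ∈ Sstar := ha.2
    have hbP : b ∈ P := by rw [hP]; exact Finset.mem_union_right _ hb.1
    set S : Finset U := insert b (Sstar.erase a) with hSdef
    have hbne : b ∉ Sstar.erase a := fun h => hb.2 (Finset.mem_of_mem_erase h)
    have hSsubP : S ⊆ P := by
      intro x hx
      rcases Finset.mem_insert.mp hx with h | h
      · exact h ▸ hbP
      · exact hSsub (Finset.mem_of_mem_erase h)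
    have hSne : S ≠ Sstar := fun h => hb.2 (h ▸ Finset.mem_insert_self b _)
    have hsum : (∑ x ∈ S, y' x) = y' b + ((∑ x ∈ Sstar, y' x) - y' a) := by
      rw [hSdef, Finset.sum_insert hbne, Finset.sum_erase_eq_sub haS]
    have hbA : b ∉ A := fun h => (Finset.disjoint_left.mp hAB h) hb.1
    have haB : a ∉ B := fun h => (Finset.disjoint_left.mp hAB ha.1) h
    have hSA' : (S ∩ A).card = k := by
      have : S ∩ A = (Sstar ∩ A).erase a := by
        rw [hSdef, Finset.insert_inter_of_notMem hbA, Finset.erase_inter]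
      rw [this, Finset.card_erase_of_mem (Finset.mem_inter.mpr ⟨haS, ha.1⟩), hSA]; omega
    have hSB' : (S ∩ B).card = k := by
      have : S ∩ B = insert b (Sstar ∩ B) := by
        rw [hSdef, Finset.insert_inter_of_mem hb.1, Finset.erase_inter,
          Finset.erase_eq_of_notMem (fun h => haB (Finset.mem_inter.mp h).2)]
      rw [this, Finset.card_insert_of_notMem (fun h => hb.2 (Finset.mem_inter.mp h).1), hSB]
      omega
    have hvS : vS k A B Sstar S = (2 * k : ℝ) + 1 / 2 := by
      rw [vS, if_neg hSne, vbar, if_pos (Or.inr ⟨hSA', hSB'⟩)]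
    have := hmin S hSsubP hSne
    rw [hvSstar, hsum, hvS] at this
    linarith
end

section
/- Fix an integer k ≥ 2 and disjoint finite sets A, B with |A| = |B| = 2k; let P = A ∪ B. Let y' : P → ℝ and let S' ⊆ P be a minimizer of y'(S) − v̄(S) over all S ⊆ P. Let 𝒮(y') be the collection of all sets S* ⊆ P with |S*∩A| = k+1 and |S*∩B| = k−1 such that S' is not a minimizer of y'(S) − v_{S*}(S) over all S ⊆ P. Then |𝒮(y')| ≤ binom(2k, k+1). -/
open Classical

/-- If `S'` minimizes the excess `y'(S) − v̄(S)` over all `S ⊆ P`, then the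
number of sets `S* ⊆ P` with `|S*∩A| = k+1`, `|S*∩B| = k−1` for which `S'` fails to be a
minimizer of `y'(S) − v_{S*}(S)` is at most `binom(2k, k+1)`. -/
theorem stmt6 {U : Type*} [DecidableEq U] (k : ℕ) (hk : 2 ≤ k)
    (A B : Finset U) (hAB : Disjoint A B) (hA : A.card = 2 * k) (hB : B.card = 2 * k)
    (P : Finset U) (hP : P = A ∪ B)
    (y' : U → ℝ) (S' : Finset U) (hS'sub : S' ⊆ P)
    (hmin : ∀ S ⊆ P,
      (∑ p ∈ S', y' p) - vbar k A B S' ≤ (∑ p ∈ S, y' p) - vbar k A B S) :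
    (P.powerset.filter (fun Sstar =>
        (Sstar ∩ A).card = k + 1 ∧ (Sstar ∩ B).card = k - 1 ∧
        ¬ ∀ S ⊆ P,
          (∑ p ∈ S', y' p) - vS k A B Sstar S' ≤
            (∑ p ∈ S, y' p) - vS k A B Sstar S)).card
      ≤ (2 * k).choose (k + 1) := by
  classical
  set m : ℝ := (∑ p ∈ S', y' p) - vbar k A B S' with hm
  set F : Finset (Finset U) := P.powerset.filter (fun Sstar =>
        (Sstar ∩ A).card = k + 1 ∧ (Sstar ∩ B).card = k - 1 ∧
        ¬ ∀ S ⊆ P,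
          (∑ p ∈ S', y' p) - vS k A B Sstar S' ≤
            (∑ p ∈ S, y' p) - vS k A B Sstar S) with hFdef
  -- splitting a subset of P into its A and B parts
  have hdisjAB : ∀ S T : Finset U, S ⊆ A → T ⊆ B → Disjoint S T := by
    intro S T hSA hTB
    exact hAB.mono hSA hTB
  have hsplit : ∀ S : Finset U, S ⊆ P → S = (S ∩ A) ∪ (S ∩ B) := by
    intro S hS
    have : S ∩ (A ∪ B) = S := Finset.inter_eq_left.mpr (hP ▸ hS)
    rw [← Finset.inter_union_distrib_left, this]
  have hcard2k : ∀ S : Finset U, S ⊆ P → (S ∩ A).card = k + 1 → (S ∩ B).card = k - 1 →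
      S.card = 2 * k := by
    intro S hS h1 h2
    have := hsplit S hS
    rw [this, Finset.card_union_of_disjoint
      (hdisjAB _ _ Finset.inter_subset_right Finset.inter_subset_right), h1, h2]
    omega
  have hvbar2k : ∀ S : Finset U, S ⊆ P → (S ∩ A).card = k + 1 → (S ∩ B).card = k - 1 →
      vbar k A B S = (2 * k : ℝ) := by
    intro S hS h1 h2
    have hc := hcard2k S hS h1 h2
    rw [vbar, if_neg, hc]
    · push_cast; ring
    · rw [hc, h1]
      push_neg
      refine ⟨by omega, fun h => absurd h (by omega)⟩
  -- every member of F has small sum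
  have hfail : ∀ Sstar ∈ F, Sstar ⊆ P ∧ (Sstar ∩ A).card = k + 1 ∧
      (Sstar ∩ B).card = k - 1 ∧ (∑ p ∈ Sstar, y' p) < m + 2 * k + 1 / 6 := by
    intro Sstar hmemF
    rw [hFdef, Finset.mem_filter, Finset.mem_powerset] at hmemF
    obtain ⟨hsub, hA1, hB1, hnot⟩ := hmemF
    push_neg at hnot
    obtain ⟨S, hSP, hlt⟩ := hnot
    refine ⟨hsub, hA1, hB1, ?_⟩
    have hvstar : vbar k A B Sstar = (2 * k : ℝ) := hvbar2k Sstar hsub hA1 hB1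
    simp only [vS] at hlt
    by_cases hS'eq : S' = Sstar
    · exfalso
      by_cases hSeq : S = Sstar
      · rw [hSeq, hS'eq] at hlt; exact lt_irrefl _ hlt
      · rw [if_neg hSeq, if_pos hS'eq] at hlt
        have h1 := hmin S hSP
        have hv' : vbar k A B S' = (2 * k : ℝ) := by rw [hS'eq]; exact hvstar
        rw [hm, hv'] at h1
        linarith
    · rw [if_neg hS'eq] at hlt
      by_cases hSeq : S = Sstar
      · rw [hSeq, if_pos rfl] at hlt
        rw [hm]
        linarith
      · rw [if_neg hSeq] at hlt
        exact absurd (hmin S hSP) (not_le.mpr hlt)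
  -- key pairwise property
  have key : ∀ S1 ∈ F, ∀ S2 ∈ F, S1 ∩ A = S2 ∩ A ∨ S1 ∩ B = S2 ∩ B := by
    intro S1 hS1 S2 hS2
    by_contra hcon
    push_neg at hcon
    obtain ⟨hTA, hTB⟩ := hcon
    obtain ⟨hsub1, h1A, h1B, hlt1⟩ := hfail S1 hS1
    obtain ⟨hsub2, h2A, h2B, hlt2⟩ := hfail S2 hS2
    -- pick x0 ∈ (S1∩A) \ (S2∩A)
    have hns1 : ¬ (S1 ∩ A) ⊆ (S2 ∩ A) := by
      intro h
      exact hTA (Finset.eq_of_subset_of_card_le h (by rw [h1A, h2A]))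
    obtain ⟨x0, hx0mem, hx0not⟩ := Finset.not_subset.mp hns1
    -- pick y0 ∈ (S2∩B) \ (S1∩B)
    have hns2 : ¬ (S2 ∩ B) ⊆ (S1 ∩ B) := by
      intro h
      exact hTB (Finset.eq_of_subset_of_card_le h (by rw [h1B, h2B])).symm
    obtain ⟨y0, hy0mem, hy0not⟩ := Finset.not_subset.mp hns2
    set Ta : Finset U := (S1 ∩ A).erase x0 with hTa
    set Ra : Finset U := insert y0 (S1 ∩ B) with hRa
    set Tb : Finset U := insert x0 (S2 ∩ A) with hTb
    set Rb : Finset U := (S2 ∩ B).erase y0 with hRb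
    have hTaA : Ta ⊆ A := (Finset.erase_subset _ _).trans Finset.inter_subset_right
    have hRaB : Ra ⊆ B := by
      rw [hRa]
      exact Finset.insert_subset (Finset.inter_subset_right hy0mem) Finset.inter_subset_right
    have hTbA : Tb ⊆ A := by
      rw [hTb]
      exact Finset.insert_subset (Finset.inter_subset_right hx0mem) Finset.inter_subset_right
    have hRbB : Rb ⊆ B := (Finset.erase_subset _ _).trans Finset.inter_subset_right
    set Sa : Finset U := Ta ∪ Ra with hSa
    set Sb : Finset U := Tb ∪ Rb with hSb
    have hSaP : Sa ⊆ P := by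
      rw [hSa, hP]; exact Finset.union_subset_union hTaA hRaB
    have hSbP : Sb ⊆ P := by
      rw [hSb, hP]; exact Finset.union_subset_union hTbA hRbB
    -- intersections of Sa
    have interA : ∀ T R : Finset U, T ⊆ A → R ⊆ B → (T ∪ R) ∩ A = T := by
      intro T R hT hR
      have h1 : R ∩ A = ∅ := Finset.disjoint_iff_inter_eq_empty.mp (hAB.symm.mono hR le_rfl)
      rw [Finset.union_inter_distrib_right, Finset.inter_eq_left.mpr hT, h1,
        Finset.union_empty]
    have interB : ∀ T R : Finset U, T ⊆ A → R ⊆ B → (T ∪ R) ∩ B = R := by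
      intro T R hT hR
      rw [Finset.union_inter_distrib_right, Finset.inter_eq_left.mpr hR,
        Finset.disjoint_iff_inter_eq_empty.mp (hAB.mono hT le_rfl), Finset.empty_union]
    have hTacard : Ta.card = k := by
      rw [hTa, Finset.card_erase_of_mem hx0mem, h1A]
      omega
    have hRacard : Ra.card = k := by
      rw [hRa, Finset.card_insert_of_notMem hy0not, h1B]; omega
    have hTbcard : Tb.card = k + 2 := by
      rw [hTb, Finset.card_insert_of_notMem hx0not, h2A]
    have hRbcard : Rb.card = k - 2 := by
      rw [hRb, Finset.card_erase_of_mem hy0mem, h2B]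
      omega
    have hvSa : vbar k A B Sa = (2 * k : ℝ) + 1 / 2 := by
      rw [vbar, if_pos]
      right
      rw [hSa, interA Ta Ra hTaA hRaB, interB Ta Ra hTaA hRaB]
      exact ⟨hTacard, hRacard⟩
    have hSbcard : Sb.card = 2 * k := by
      rw [hSb, Finset.card_union_of_disjoint (hdisjAB _ _ hTbA hRbB), hTbcard, hRbcard]
      omega
    have hvSb : vbar k A B Sb = (2 * k : ℝ) := by
      rw [vbar, if_neg, hSbcard]
      · push_cast; ring
      · rw [hSbcard, hSb, interA Tb Rb hTbA hRbB, hTbcard]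
        push_neg
        exact ⟨by omega, fun h => absurd h (by omega)⟩
    -- sum identities
    have hsum1 : (∑ p ∈ S1, y' p) = (∑ p ∈ S1 ∩ A, y' p) + (∑ p ∈ S1 ∩ B, y' p) := by
      rw [hsplit S1 hsub1]
      rw [Finset.sum_union (hdisjAB _ _ Finset.inter_subset_right Finset.inter_subset_right)]
      rw [← hsplit S1 hsub1]
    have hsum2 : (∑ p ∈ S2, y' p) = (∑ p ∈ S2 ∩ A, y' p) + (∑ p ∈ S2 ∩ B, y' p) := by
      rw [hsplit S2 hsub2]
      rw [Finset.sum_union (hdisjAB _ _ Finset.inter_subset_right Finset.inter_subset_right)]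
      rw [← hsplit S2 hsub2]
    have hsumSa : (∑ p ∈ Sa, y' p) = (∑ p ∈ Ta, y' p) + (∑ p ∈ Ra, y' p) :=
      Finset.sum_union (hdisjAB _ _ hTaA hRaB)
    have hsumSb : (∑ p ∈ Sb, y' p) = (∑ p ∈ Tb, y' p) + (∑ p ∈ Rb, y' p) :=
      Finset.sum_union (hdisjAB _ _ hTbA hRbB)
    have hsumTa : (∑ p ∈ Ta, y' p) + y' x0 = ∑ p ∈ S1 ∩ A, y' p :=
      Finset.sum_erase_add _ _ hx0mem
    have hsumRa : (∑ p ∈ Ra, y' p) = y' y0 + ∑ p ∈ S1 ∩ B, y' p :=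
      Finset.sum_insert hy0not
    have hsumTb : (∑ p ∈ Tb, y' p) = y' x0 + ∑ p ∈ S2 ∩ A, y' p :=
      Finset.sum_insert hx0not
    have hsumRb : (∑ p ∈ Rb, y' p) + y' y0 = ∑ p ∈ S2 ∩ B, y' p :=
      Finset.sum_erase_add _ _ hy0mem
    have hminSa := hmin Sa hSaP
    have hminSb := hmin Sb hSbP
    rw [hvSa] at hminSa
    rw [hvSb] at hminSb
    linarith
  -- now count
  have hdet : ∀ S1 ∈ F, ∀ S2 ∈ F, S1 ∩ A = S2 ∩ A → S1 ∩ B = S2 ∩ B → S1 = S2 := by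
    intro S1 hS1 S2 hS2 hA' hB'
    obtain ⟨hsub1, -, -, -⟩ := hfail S1 hS1
    obtain ⟨hsub2, -, -, -⟩ := hfail S2 hS2
    rw [hsplit S1 hsub1, hsplit S2 hsub2, hA', hB']
  by_cases hall : ∀ S1 ∈ F, ∀ S2 ∈ F, S1 ∩ A = S2 ∩ A
  · -- inject via B-part
    have hle : F.card ≤ (B.powersetCard (k - 1)).card := by
      apply Finset.card_le_card_of_injOn (fun S => S ∩ B)
      · intro S hS
        obtain ⟨-, -, hcB, -⟩ := hfail S hS
        exact Finset.mem_powersetCard.mpr ⟨Finset.inter_subset_right, hcB⟩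
      · intro S1 hS1 S2 hS2 hEq
        exact hdet S1 hS1 S2 hS2 (hall S1 hS1 S2 hS2) hEq
    rw [Finset.card_powersetCard, hB] at hle
    have hsymm : (2 * k).choose (k - 1) = (2 * k).choose (k + 1) := by
      have h1 : (2 * k).choose (2 * k - (k + 1)) = (2 * k).choose (k + 1) :=
        Nat.choose_symm (by omega)
      rwa [show 2 * k - (k + 1) = k - 1 by omega] at h1
    rwa [hsymm] at hle
  · push_neg at hall
    obtain ⟨S1, hS1, S2, hS2, hne⟩ := hall
    have hBeq : ∀ S ∈ F, S ∩ B = S1 ∩ B := by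
      intro S hS
      rcases key S hS S1 hS1 with h | h
      · rcases key S hS S2 hS2 with h2 | h2
        · exact absurd (h ▸ h2) hne
        · have hb12 : S1 ∩ B = S2 ∩ B := (key S1 hS1 S2 hS2).resolve_left hne
          rw [h2, ← hb12]
      · exact h
    have hle : F.card ≤ (A.powersetCard (k + 1)).card := by
      apply Finset.card_le_card_of_injOn (fun S => S ∩ A)
      · intro S hS
        obtain ⟨-, hcA, -, -⟩ := hfail S hS
        exact Finset.mem_powersetCard.mpr ⟨Finset.inter_subset_right, hcA⟩
      · intro Sx hSx Sy hSy hEq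
        exact hdet Sx hSx Sy hSy hEq (by rw [hBeq Sx hSx, hBeq Sy hSy])
    rwa [Finset.card_powersetCard, hA] at hle
end

section
/- Fix an integer k ≥ 2 and disjoint finite sets A, B with |A| = |B| = 2k; let P = A ∪ B. Let S* ⊆ P satisfy |S*∩A| = k+1 and |S*∩B| = k−1. Then for every S ⊆ P with |S∩A| ≠ |S∩B| and S ≠ S*, one has |S| − v_{S*}(S) > |S*| − v_{S*}(S*) = −1/6. In other words, with the cost allocation y ≡ 1, the set S* is the unique minimizer of the excess y(S) − v_{S*}(S) among all coalitions S with |S∩A| ≠ |S∩B|. -/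
/-- With the all-ones allocation, `S*` is the unique minimizer of the excess
`|S| − v_{S*}(S)` among coalitions `S ⊆ P` with `|S∩A| ≠ |S∩B|`, and its excess is `−1/6`. -/
theorem stmt7 {U : Type*} [DecidableEq U] (k : ℕ) (hk : 2 ≤ k)
    (A B : Finset U) (hAB : Disjoint A B) (hA : A.card = 2 * k) (hB : B.card = 2 * k)
    (P : Finset U) (hP : P = A ∪ B)
    (Sstar : Finset U) (hSsub : Sstar ⊆ P)
    (hSA : (Sstar ∩ A).card = k + 1) (hSB : (Sstar ∩ B).card = k - 1) :
    (∀ S ⊆ P, (S ∩ A).card ≠ (S ∩ B).card → S ≠ Sstar →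
      (Sstar.card : ℝ) - vS k A B Sstar Sstar < (S.card : ℝ) - vS k A B Sstar S) ∧
    (Sstar.card : ℝ) - vS k A B Sstar Sstar = -(1 / 6) := by
  have hcard : ∀ S ⊆ P, S.card = (S ∩ A).card + (S ∩ B).card := by
    intro S hS
    have hSeq : S = (S ∩ A) ∪ (S ∩ B) := by
      rw [← Finset.inter_union_distrib_left, ← hP]
      exact (Finset.inter_eq_left.mpr hS).symm
    conv_lhs => rw [hSeq]
    rw [Finset.card_union_of_disjoint
      (hAB.mono Finset.inter_subset_right Finset.inter_subset_right)]
  have hScard : Sstar.card = 2 * k := by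
    rw [hcard Sstar hSsub, hSA, hSB]; omega
  have hVal : (Sstar.card : ℝ) - vS k A B Sstar Sstar = -(1/6) := by
    simp [vS, hScard]
  refine ⟨?_, hVal⟩
  intro S hS hne hneq
  rw [hVal, vS, if_neg hneq, vbar]
  by_cases h : 2 * k < S.card
  · rw [if_pos (Or.inl h)]
    have : (2*k:ℝ) + 1 ≤ (S.card : ℝ) := by exact_mod_cast h
    linarith
  · have hcond : ¬(2 * k < S.card ∨ ((S ∩ A).card = k ∧ (S ∩ B).card = k)) := by
      rintro (h' | ⟨h1, h2⟩)
      · exact h h'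
      · exact hne (h1.trans h2.symm)
    rw [if_neg hcond]
    norm_num
end

section
/- Let P be a finite set and v : 2^P → ℝ monotone (v(S) ≤ v(T) whenever S ⊆ T ⊆ P) with v(∅) = 0. Let y : P → ℝ with y ≥ 0, let A, B ⊆ P be disjoint, let α ≥ 1, and let U ≥ v(P). Define ŷ : P → ℝ by ŷ_p = 0 for p ∈ A, ŷ_p = α·U + 1 for p ∈ B, and ŷ_p = y_p otherwise. Suppose S' ⊆ P and λ' ∈ ℝ satisfy λ' ≤ v(S') and ŷ(S') − λ' ≤ α·ŷ(T) − v(T) for all T ⊆ P. Then S' ∩ B = ∅, and the set S'' := S' ∪ A satisfies λ' ≤ v(S'') and y(S'') − λ' ≤ α·y(T) − v(T) for all T with A ⊆ T ⊆ P \ B. -/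
/-- An `α`-approximate solution to the unrestricted minimum-excess problem for
the modified allocation `ŷ` (zero on `A`, prohibitively expensive on `B`) avoids `B`, and
adding `A` to it yields an `α`-approximate solution to the minimum-excess problem
restricted to coalitions `T` with `A ⊆ T ⊆ P \ B`. -/
theorem stmt8 {P : Type*} [Fintype P] [DecidableEq P]
    (v : Finset P → ℝ)
    (hmono : ∀ S T : Finset P, S ⊆ T → v S ≤ v T) (hv0 : v ∅ = 0)
    (y : P → ℝ) (hy : ∀ p, 0 ≤ y p)
    (A B : Finset P) (hAB : Disjoint A B)
    (α : ℝ) (hα : 1 ≤ α) (U : ℝ) (hU : v Finset.univ ≤ U)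
    (yhat : P → ℝ)
    (hyhat : ∀ p, yhat p = if p ∈ A then 0 else if p ∈ B then α * U + 1 else y p)
    (S' : Finset P) (lam : ℝ) (hlam : lam ≤ v S')
    (happrox : ∀ T : Finset P,
      (∑ p ∈ S', yhat p) - lam ≤ α * (∑ p ∈ T, yhat p) - v T) :
    S' ∩ B = ∅ ∧ lam ≤ v (S' ∪ A) ∧
      ∀ T : Finset P, A ⊆ T → Disjoint T B →
        (∑ p ∈ S' ∪ A, y p) - lam ≤ α * (∑ p ∈ T, y p) - v T := by
  have hU0 : 0 ≤ U := by
    have := hmono ∅ Finset.univ (Finset.empty_subset _)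
    linarith
  have hyhat_nonneg : ∀ p, 0 ≤ yhat p := by
    intro p
    rw [hyhat p]
    split_ifs
    · exact le_refl 0
    · nlinarith
    · exact hy p
  have hSB : S' ∩ B = ∅ := by
    by_contra h
    obtain ⟨p, hp⟩ := Finset.nonempty_of_ne_empty h
    rw [Finset.mem_inter] at hp
    have hpA : p ∉ A := fun hpA => (Finset.disjoint_left.mp hAB hpA) hp.2
    have hval : yhat p = α * U + 1 := by rw [hyhat p, if_neg hpA, if_pos hp.2]
    have hsum : α * U + 1 ≤ ∑ q ∈ S', yhat q := by
      rw [← hval]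
      exact Finset.single_le_sum (fun q _ => hyhat_nonneg q) hp.1
    have h0 := happrox ∅
    simp [hv0] at h0
    have hvS : v S' ≤ v Finset.univ := hmono _ _ (Finset.subset_univ _)
    nlinarith
  have hS'B : ∀ p ∈ S', p ∉ B := by
    intro p hp hpB
    have : p ∈ S' ∩ B := Finset.mem_inter.mpr ⟨hp, hpB⟩
    simp [hSB] at this
  -- sum of yhat over S' equals sum of y over S' \ A
  have hsumS : ∑ p ∈ S', yhat p = ∑ p ∈ S' \ A, y p := by
    rw [← Finset.sum_subset (Finset.sdiff_subset : S' \ A ⊆ S')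
      (fun p hp hnp => by
        have hpA : p ∈ A := by
          by_contra hA
          exact hnp (Finset.mem_sdiff.mpr ⟨hp, hA⟩)
        rw [hyhat p, if_pos hpA])]
    refine Finset.sum_congr rfl (fun p hp => ?_)
    rw [Finset.mem_sdiff] at hp
    rw [hyhat p, if_neg hp.2, if_neg (hS'B p hp.1)]
  refine ⟨hSB, le_trans hlam (hmono _ _ Finset.subset_union_left), ?_⟩
  intro T hAT hTB
  have hsumT : ∑ p ∈ T, yhat p = ∑ p ∈ T \ A, y p := by
    rw [← Finset.sum_subset (Finset.sdiff_subset : T \ A ⊆ T)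
      (fun p hp hnp => by
        have hpA : p ∈ A := by
          by_contra hA
          exact hnp (Finset.mem_sdiff.mpr ⟨hp, hA⟩)
        rw [hyhat p, if_pos hpA])]
    refine Finset.sum_congr rfl (fun p hp => ?_)
    rw [Finset.mem_sdiff] at hp
    rw [hyhat p, if_neg hp.2, if_neg (Finset.disjoint_left.mp hTB hp.1)]
  have hTsplit : ∑ p ∈ T \ A, y p + ∑ p ∈ A, y p = ∑ p ∈ T, y p :=
    Finset.sum_sdiff hAT
  have hSsplit : ∑ p ∈ S' ∪ A, y p = ∑ p ∈ S' \ A, y p + ∑ p ∈ A, y p := by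
    rw [← Finset.sum_union (Finset.sdiff_disjoint : Disjoint (S' \ A) A),
      Finset.sdiff_union_self_eq_union]
  have hA0 : 0 ≤ ∑ p ∈ A, y p := Finset.sum_nonneg (fun p _ => hy p)
  have h := happrox T
  rw [hsumS, hsumT] at h
  nlinarith [h, hA0, hTsplit, hSsplit]
end

section
/- Let P be a finite set and v : 2^P → ℝ monotone (v(S) ≤ v(T) whenever S ⊆ T ⊆ P) with v(∅) = 0. Let y : P → ℝ with y ≥ 0, let α ≥ 1 and ε > 0, let S* ⊆ P, and let p ∈ P \ S* with y_p ≤ ε·y(S*). Suppose S ⊆ P with p ∉ S and λ ∈ ℝ satisfy λ ≤ v(S) and y(S) − λ ≤ α·y(T) − v(T) for all T ⊆ P with p ∉ T. Then λ ≤ v(S ∪ {p}), y(S) − λ ≤ α·y(S*) − v(S*), and y(S ∪ {p}) − λ ≤ (α + ε)·y(S*) − v(S*). -/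
/-- Case (a) of the reduction of LSA-MinExcess to MinExcess: if `p ∉ S*` is
cheap (`y p ≤ ε·y(S*)`) and `(S, λ)` is an `α`-approximate minimum-excess solution among
coalitions avoiding `p`, then `λ` remains a valid value bound for `S ∪ {p}`, `S` is cheap,
and `S ∪ {p}` is `(α+ε)`-cheap compared to `S*`. -/
theorem stmt9 {P : Type*} [Fintype P] [DecidableEq P]
    (v : Finset P → ℝ)
    (hmono : ∀ S T : Finset P, S ⊆ T → v S ≤ v T) (hv0 : v ∅ = 0)
    (y : P → ℝ) (hy : ∀ p, 0 ≤ y p)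
    (α ε : ℝ) (hα : 1 ≤ α) (hε : 0 < ε)
    (Sstar : Finset P) (p : P) (hpS : p ∉ Sstar)
    (hyp : y p ≤ ε * ∑ q ∈ Sstar, y q)
    (S : Finset P) (hpS' : p ∉ S) (lam : ℝ) (hlam : lam ≤ v S)
    (happrox : ∀ T : Finset P, p ∉ T →
      (∑ q ∈ S, y q) - lam ≤ α * (∑ q ∈ T, y q) - v T) :
    lam ≤ v (insert p S) ∧
    (∑ q ∈ S, y q) - lam ≤ α * (∑ q ∈ Sstar, y q) - v Sstar ∧
    (∑ q ∈ insert p S, y q) - lam ≤ (α + ε) * (∑ q ∈ Sstar, y q) - v Sstar := by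
  have h2 := happrox Sstar hpS
  refine ⟨hlam.trans (hmono _ _ (Finset.subset_insert _ _)), h2, ?_⟩
  rw [Finset.sum_insert hpS']
  nlinarith [h2, hyp]
end

section
/- Let P be a finite set, P' ⊆ P, y : P → ℝ with y ≥ 0, ε > 0, K = ⌈1/ε⌉, and S* ⊆ P. Assume that every p ∈ P' \ S* satisfies y_p > ε·y(S*). Let I ⊆ S* ∩ P' with |I| = min(K, |S* ∩ P'|) be chosen so that y(I) is maximal among all subsets of S* ∩ P' of that cardinality. Define O := {p ∈ P' \ I : y_p > min_{q∈I} y_q} if |I| = K, and O := P' \ I if |I| < K. Then P' \ S* = O. -/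
open Classical

/-- Case (b) of the reduction of LSA-MinExcess to MinExcess: if every player
of `P'` outside `S*` is expensive, and `I` is a `y`-maximal subset of `S* ∩ P'` of size
`min(K, |S* ∩ P'|)` with `K = ⌈1/ε⌉`, then the out-set `O` (players of `P' \ I` whose
`y`-value exceeds `min_{q∈I} y q` if `|I| = K`, and all of `P' \ I` otherwise) is exactly
`P' \ S*`. -/
theorem stmt10 {U : Type*} [DecidableEq U]
    (P P' : Finset U) (hP' : P' ⊆ P)
    (y : U → ℝ) (hy : ∀ p ∈ P, 0 ≤ y p)
    (ε : ℝ) (hε : 0 < ε) (K : ℕ) (hK : K = ⌈1 / ε⌉₊)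
    (Sstar : Finset U) (hS : Sstar ⊆ P)
    (hbig : ∀ p ∈ P' \ Sstar, ε * (∑ q ∈ Sstar, y q) < y p)
    (I : Finset U) (hIsub : I ⊆ Sstar ∩ P')
    (hIcard : I.card = min K (Sstar ∩ P').card)
    (hImax : ∀ J ⊆ Sstar ∩ P', J.card = I.card → (∑ q ∈ J, y q) ≤ ∑ q ∈ I, y q)
    (O : Finset U)
    (hO : O = if I.card = K
        then (P' \ I).filter (fun p => ∃ q ∈ I, y q < y p)
        else P' \ I) :
    P' \ Sstar = O := by
  have hKpos : 0 < K := by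
    rw [hK]; exact Nat.ceil_pos.mpr (by positivity)
  have hSnn : 0 ≤ ∑ q ∈ Sstar, y q :=
    Finset.sum_nonneg fun q hq => hy q (hS hq)
  subst hO
  by_cases hc : I.card = K
  · rw [if_pos hc]
    ext p
    simp only [Finset.mem_sdiff, Finset.mem_filter]
    constructor
    · rintro ⟨hp, hps⟩
      have hpI : p ∉ I := fun h => hps (Finset.mem_inter.mp (hIsub h)).1
      refine ⟨⟨hp, hpI⟩, ?_⟩
      have hIne : I.Nonempty := Finset.card_pos.mp (by omega)
      obtain ⟨q0, hq0I, hq0min⟩ := I.exists_min_image y hIne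
      refine ⟨q0, hq0I, ?_⟩
      have h1 : (K : ℝ) * y q0 ≤ ∑ q ∈ I, y q := by
        calc (K : ℝ) * y q0 = ∑ _q ∈ I, y q0 := by
              rw [Finset.sum_const, hc]; ring
          _ ≤ ∑ q ∈ I, y q := Finset.sum_le_sum fun q hq => hq0min q hq
      have h2 : ∑ q ∈ I, y q ≤ ∑ q ∈ Sstar, y q :=
        Finset.sum_le_sum_of_subset_of_nonneg
          (hIsub.trans Finset.inter_subset_left)
          (fun q hq _ => hy q (hS hq))
      have h3 : (1 : ℝ) / ε ≤ (K : ℝ) := by rw [hK]; exact Nat.le_ceil _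
      have h4 : 1 ≤ ε * (K : ℝ) := by
        rw [div_le_iff₀ hε] at h3; linarith [h3]
      have h5 : ε * (∑ q ∈ Sstar, y q) < y p := hbig p (Finset.mem_sdiff.mpr ⟨hp, hps⟩)
      have hq0nn : 0 ≤ y q0 := hy q0 (hP' (Finset.mem_inter.mp (hIsub hq0I)).2)
      nlinarith [mul_le_mul_of_nonneg_left (le_trans h1 h2) (le_of_lt hε)]
    · rintro ⟨⟨hp, hpI⟩, q, hqI, hqlt⟩
      refine ⟨hp, fun hpS => ?_⟩
      have hqcard : 0 < I.card := Finset.card_pos.mpr ⟨q, hqI⟩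
      set J := insert p (I.erase q) with hJ
      have hpnotin : p ∉ I.erase q := fun h => hpI (Finset.mem_of_mem_erase h)
      have hJsub : J ⊆ Sstar ∩ P' :=
        Finset.insert_subset (Finset.mem_inter.mpr ⟨hpS, hp⟩)
          ((Finset.erase_subset _ _).trans hIsub)
      have hJcard : J.card = I.card := by
        rw [hJ, Finset.card_insert_of_notMem hpnotin, Finset.card_erase_of_mem hqI]
        omega
      have hJsum : ∑ x ∈ J, y x = y p + ((∑ x ∈ I, y x) - y q) := by
        rw [hJ, Finset.sum_insert hpnotin, Finset.sum_erase_eq_sub hqI]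
      have := hImax J hJsub hJcard
      rw [hJsum] at this
      linarith
  · rw [if_neg hc]
    have hIeq : I = Sstar ∩ P' := by
      apply Finset.eq_of_subset_of_card_le hIsub
      omega
    ext p
    simp only [Finset.mem_sdiff, hIeq, Finset.mem_inter]
    tauto
end

section
/- For every n ∈ ℕ and every ε with 0 < ε ≤ 1, there exist a finite set P with |P| = 8(n+2)+1 and monotone, superadditive value functions v, ṽ : 2^P → ℝ with v(∅) = ṽ(∅) = 0 such that |v(S) − ṽ(S)| ≤ ε for all S ⊆ P, and there are allocations y, ỹ : P → ℝ with y(P) = v(P) and ỹ(P) = ṽ(P) such that θ_v(z) ≤_lex θ_v(y) for every z : P → ℝ with z(P) = v(P), θ_{ṽ}(z) ≤_lex θ_{ṽ}(ỹ) for every z : P → ℝ with z(P) = ṽ(P), and |y_p − ỹ_p| = 2^n·ε for some player p ∈ P. -/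
/-- The sorted (non-decreasing) list of excesses `y(S) − v(S)` over all coalitions
`S ⊆ P`. -/
noncomputable def excessListOn (P : Finset ℕ) (v : Finset ℕ → ℝ) (y : ℕ → ℝ) : List ℝ :=
  (P.powerset.val.map fun S => (∑ p ∈ S, y p) - v S).sort (· ≤ ·)

/-- Lexicographic order (`≤`) on lists of reals. -/
def lexLE (l₁ l₂ : List ℝ) : Prop := l₁ = l₂ ∨ List.Lex (· < ·) l₁ l₂

namespace Stmt12

open Finset

/-! ### A generic lexicographic comparison lemma for sorted lists -/

lemma lex_aux (τ : ℝ) : ∀ (l₂ l₁ : List ℝ), l₁.Pairwise (· ≤ ·) → l₂.Pairwise (· ≤ ·) →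
    l₁.length = l₂.length →
    (Multiset.filter (fun x => x < τ) (l₂ : Multiset ℝ) ≤ (l₁ : Multiset ℝ)) →
    Multiset.card (Multiset.filter (fun x => x < τ) (l₂ : Multiset ℝ)) <
      Multiset.card (Multiset.filter (fun x => x < τ) (l₁ : Multiset ℝ)) →
    List.Lex (· < ·) l₁ l₂ := by
  intro l₂
  induction l₂ with
  | nil =>
    intro l₁ _ _ hlen _ hcard
    have h1 : l₁ = [] := List.length_eq_zero_iff.mp (by simpa using hlen)
    subst h1
    simp at hcard
  | cons b t₂ ih =>
    intro l₁ h₁ h₂ hlen hsub hcard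
    cases l₁ with
    | nil => simp at hlen
    | cons a t₁ =>
      -- there is an element of `a :: t₁` below τ
      have hex : ∃ x ∈ (a :: t₁ : List ℝ), x < τ := by
        have hpos : 0 < Multiset.card
            (Multiset.filter (fun x => x < τ) ((a :: t₁ : List ℝ) : Multiset ℝ)) :=
          lt_of_le_of_lt (Nat.zero_le _) hcard
        obtain ⟨x, hx⟩ := Multiset.exists_mem_of_ne_zero (Multiset.card_pos.mp hpos)
        have hx' := Multiset.mem_filter.mp hx
        exact ⟨x, by simpa using hx'.1, hx'.2⟩
      obtain ⟨x, hxl, hxτ⟩ := hex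
      have haxle : a ≤ x := by
        rcases List.mem_cons.mp hxl with h | h
        · exact le_of_eq h.symm
        · exact (List.pairwise_cons.mp h₁).1 x h
      have haτ : a < τ := lt_of_le_of_lt haxle hxτ
      rcases lt_trichotomy a b with hab | hab | hab
      · exact List.Lex.rel hab
      · subst hab
        -- both heads equal and < τ; peel them off
        have hcoe1 : ((a :: t₁ : List ℝ) : Multiset ℝ) = a ::ₘ (t₁ : Multiset ℝ) := by
          simp
        have hcoe2 : ((a :: t₂ : List ℝ) : Multiset ℝ) = a ::ₘ (t₂ : Multiset ℝ) := by
          simp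
        have hfilt : ∀ s : Multiset ℝ, Multiset.filter (fun x => x < τ) (a ::ₘ s)
            = a ::ₘ Multiset.filter (fun x => x < τ) s := by
          intro s
          rw [Multiset.filter_cons, if_pos haτ]
          simp
        simp only [hcoe1, hcoe2, hfilt] at hsub hcard
        apply List.Lex.cons
        apply ih t₁ (List.pairwise_cons.mp h₁).2 (List.pairwise_cons.mp h₂).2
          (by simpa using hlen)
        · exact (Multiset.cons_le_cons_iff a).mp hsub
        · simpa using hcard
      · -- b < a : contradiction
        exfalso
        by_cases hbτ : b < τ
        · have hbmem : b ∈ ((a :: t₁ : List ℝ) : Multiset ℝ) := by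
            apply Multiset.mem_of_le hsub
            rw [Multiset.mem_filter]
            constructor
            · simp
            · exact hbτ
          have hbl : b ∈ (a :: t₁ : List ℝ) := by simpa using hbmem
          have : a ≤ b := by
            rcases List.mem_cons.mp hbl with h | h
            · exact le_of_eq h.symm
            · exact (List.pairwise_cons.mp h₁).1 b h
          exact absurd this (not_le.mpr hab)
        · -- every element of b :: t₂ is ≥ b ≥ τ, so the filter is empty
          have hτb : τ ≤ b := not_lt.mp hbτ
          have hfilt0 : Multiset.filter (fun x => x < τ) ((b :: t₂ : List ℝ) : Multiset ℝ)
              = 0 := by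
            rw [Multiset.filter_eq_nil]
            intro x hx
            have hx' : x ∈ (b :: t₂ : List ℝ) := by simpa using hx
            have hbx : b ≤ x := by
              rcases List.mem_cons.mp hx' with h | h
              · exact le_of_eq h.symm
              · exact (List.pairwise_cons.mp h₂).1 x h
            exact not_lt.mpr (le_trans hτb hbx)
          -- but then the left filter is nonempty with an element < τ ≤ b < a ≤ x
          have : τ ≤ a := le_trans hτb (le_of_lt hab)
          exact absurd haτ (not_lt.mpr this)

/-! ### The generic optimality criterion -/

lemma opt (P : Finset ℕ) (v : Finset ℕ → ℝ) (y : ℕ → ℝ)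
    (H : ∀ z : ℕ → ℝ, (∑ p ∈ P, z p) = (∑ p ∈ P, y p) → (∃ p ∈ P, z p ≠ y p) →
      ∃ S₀, S₀ ⊆ P ∧ (∑ p ∈ S₀, z p) < (∑ p ∈ S₀, y p) ∧
        ∀ T, T ⊆ P → (∑ p ∈ T, z p) ≠ (∑ p ∈ T, y p) →
          (∑ p ∈ S₀, y p) - v S₀ ≤ (∑ p ∈ T, y p) - v T)
    (hy : (∑ p ∈ P, y p) = v P) :
    ∀ z : ℕ → ℝ, (∑ p ∈ P, z p) = v P →
      lexLE (excessListOn P v z) (excessListOn P v y) := by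
  intro z hz
  by_cases hzy : ∀ p ∈ P, z p = y p
  · left
    unfold excessListOn
    congr 1
    apply Multiset.map_congr rfl
    intro S hS
    have hSP : S ⊆ P := mem_powerset.mp hS
    have : (∑ p ∈ S, z p) = ∑ p ∈ S, y p :=
      Finset.sum_congr rfl fun p hp => hzy p (hSP hp)
    rw [this]
  · right
    push_neg at hzy
    obtain ⟨S₀, hS₀P, hS₀neg, hS₀min⟩ := H z (hz.trans hy.symm) hzy
    set τ := (∑ p ∈ S₀, y p) - v S₀ with hτ
    unfold excessListOn
    apply lex_aux τ
    · exact Multiset.pairwise_sort _ _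
    · exact Multiset.pairwise_sort _ _
    · rw [Multiset.length_sort, Multiset.length_sort, Multiset.card_map,
        Multiset.card_map]
    · rw [Multiset.sort_eq, Multiset.sort_eq, Multiset.filter_map]
      have hmapeq : Multiset.map (fun S => (∑ p ∈ S, y p) - v S)
            (Multiset.filter ((fun x => x < τ) ∘ fun S => (∑ p ∈ S, y p) - v S)
              P.powerset.val)
          = Multiset.map (fun S => (∑ p ∈ S, z p) - v S)
            (Multiset.filter ((fun x => x < τ) ∘ fun S => (∑ p ∈ S, y p) - v S)
              P.powerset.val) := by
        apply Multiset.map_congr rfl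
        intro T hT
        have hT' := Multiset.mem_filter.mp hT
        have hTP : T ⊆ P := mem_powerset.mp hT'.1
        have hlt : (∑ p ∈ T, y p) - v T < τ := hT'.2
        have hsum : (∑ p ∈ T, z p) = (∑ p ∈ T, y p) := by
          by_contra hne
          exact absurd hlt (not_lt.mpr (hS₀min T hTP hne))
        rw [hsum]
      rw [hmapeq]
      exact Multiset.map_le_map (Multiset.filter_le _ _)
    · rw [Multiset.sort_eq, Multiset.sort_eq, Multiset.filter_map,
        Multiset.filter_map, Multiset.card_map, Multiset.card_map]
      have h1 : Multiset.filter ((fun x => x < τ) ∘ fun S => (∑ p ∈ S, y p) - v S)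
            P.powerset.val
          = (P.powerset.filter (fun S => (∑ p ∈ S, y p) - v S < τ)).val := by
        rw [Finset.filter_val]
        rfl
      have h2 : Multiset.filter ((fun x => x < τ) ∘ fun S => (∑ p ∈ S, z p) - v S)
            P.powerset.val
          = (P.powerset.filter (fun S => (∑ p ∈ S, z p) - v S < τ)).val := by
        rw [Finset.filter_val]
        rfl
      rw [h1, h2]
      show (P.powerset.filter (fun S => (∑ p ∈ S, y p) - v S < τ)).card
        < (P.powerset.filter (fun S => (∑ p ∈ S, z p) - v S < τ)).card
      apply Finset.card_lt_card
      constructor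
      · intro T hT
        have hT' := Finset.mem_filter.mp hT
        have hTP : T ⊆ P := mem_powerset.mp hT'.1
        have hsum : (∑ p ∈ T, z p) = (∑ p ∈ T, y p) := by
          by_contra hne
          exact absurd hT'.2 (not_lt.mpr (hS₀min T hTP hne))
        exact Finset.mem_filter.mpr ⟨hT'.1, by rw [hsum]; exact hT'.2⟩
      · intro hcon
        have hS₀A : S₀ ∈ P.powerset.filter (fun S => (∑ p ∈ S, z p) - v S < τ) :=
          Finset.mem_filter.mpr ⟨mem_powerset.mpr hS₀P, by
            have : (∑ p ∈ S₀, z p) < ∑ p ∈ S₀, y p := hS₀neg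
            rw [hτ]; linarith⟩
        have := hcon hS₀A
        have := (Finset.mem_filter.mp this).2
        rw [hτ] at this
        exact absurd this (lt_irrefl _)

/-! ### The construction -/

def cc (n : ℕ) (p : ℕ) : ℤ :=
  if p ≤ n then 2 ^ p else if p ≤ 2 * n + 1 then -(2 ^ (p - (n + 1))) else 0

def KK (n : ℕ) (S : Finset ℕ) : ℤ := ∑ p ∈ S, cc n p

noncomputable def dd (n : ℕ) (ε : ℝ) (p : ℕ) : ℝ := ε * (cc n p : ℝ)

noncomputable def dS (n : ℕ) (ε : ℝ) (S : Finset ℕ) : ℝ := ∑ p ∈ S, dd n ε p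

noncomputable def fv (ε x : ℝ) : ℝ := if x = 0 then 0 else 2 + |x| - ε

noncomputable def gv (ε x : ℝ) : ℝ :=
  if x = 0 then 0 else if 0 < x then 2 else 2 + 2 * |x| - 2 * ε

noncomputable def RR (n : ℕ) : ℝ := 2 ^ (n + 4)

def PP (n : ℕ) : Finset ℕ := Finset.range (8 * (n + 2) + 1)

noncomputable def vA (n : ℕ) (ε : ℝ) (S : Finset ℕ) : ℝ := RR n * S.card - fv ε (dS n ε S)

noncomputable def vB (n : ℕ) (ε : ℝ) (S : Finset ℕ) : ℝ :=
  RR n * S.card - dS n ε S - gv ε (dS n ε S)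

noncomputable def yA (n : ℕ) : ℕ → ℝ := fun _ => RR n

noncomputable def yB (n : ℕ) (ε : ℝ) : ℕ → ℝ := fun p => RR n - dd n ε p

lemma dS_eq (n : ℕ) (ε : ℝ) (S : Finset ℕ) : dS n ε S = ε * ((KK n S : ℤ) : ℝ) := by
  unfold dS dd KK
  push_cast
  rw [Finset.mul_sum]

lemma eps_le_abs_dS {n : ℕ} {ε : ℝ} (hε0 : 0 < ε) {S : Finset ℕ}
    (h : dS n ε S ≠ 0) : ε ≤ |dS n ε S| := by
  rw [dS_eq] at h ⊢
  have hK : KK n S ≠ 0 := by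
    intro h0
    rw [h0] at h
    simp at h
  have h1 : (1 : ℝ) ≤ |((KK n S : ℤ) : ℝ)| := by
    rw [← Int.cast_abs]
    exact_mod_cast Int.one_le_abs hK
  rw [abs_mul, abs_of_pos hε0]
  nlinarith

lemma fv_zero (ε : ℝ) : fv ε 0 = 0 := by simp [fv]

lemma fv_ne (ε : ℝ) {x : ℝ} (hx : x ≠ 0) : fv ε x = 2 + |x| - ε := by simp [fv, hx]

lemma gv_zero (ε : ℝ) : gv ε 0 = 0 := by simp [gv]

lemma gv_pos_eq (ε : ℝ) {x : ℝ} (hx : 0 < x) : gv ε x = 2 := by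
  simp [gv, ne_of_gt hx, hx]

lemma gv_neg_eq (ε : ℝ) {x : ℝ} (hx : x < 0) : gv ε x = 2 + 2 * |x| - 2 * ε := by
  simp [gv, ne_of_lt hx, not_lt.mpr (le_of_lt hx)]

lemma fv_nonneg {ε : ℝ} (hε1 : ε ≤ 1) (x : ℝ) : 0 ≤ fv ε x := by
  unfold fv
  split_ifs with h
  · norm_num
  · have := abs_nonneg x
    linarith

lemma gv_nonneg {ε : ℝ} (hε1 : ε ≤ 1) (x : ℝ) : 0 ≤ gv ε x := by
  unfold gv
  split_ifs with h1 h2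
  · norm_num
  · norm_num
  · have := abs_nonneg x
    linarith

lemma fv_le {ε : ℝ} (hε0 : 0 < ε) (x : ℝ) : fv ε x ≤ 2 + |x| := by
  unfold fv
  split_ifs with h
  · have := abs_nonneg x
    linarith
  · linarith

lemma gv_le {ε : ℝ} (hε0 : 0 < ε) (x : ℝ) : gv ε x ≤ 2 + 2 * |x| := by
  unfold gv
  split_ifs with h1 h2
  · have := abs_nonneg x
    linarith
  · have := abs_nonneg x
    linarith
  · linarith

lemma fv_neg_arg (ε x : ℝ) : fv ε (-x) = fv ε x := by
  unfold fv
  simp [neg_eq_zero, abs_neg]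

lemma two_le_gv {ε : ℝ} (hε0 : 0 < ε) {x : ℝ} (hx : ε ≤ |x|) : 2 ≤ gv ε x := by
  have hx0 : x ≠ 0 := by
    intro h
    rw [h] at hx
    simp at hx
    linarith
  unfold gv
  rw [if_neg hx0]
  split_ifs with h2
  · norm_num
  · linarith

lemma fv_subadd {ε : ℝ} (hε0 : 0 < ε) (hε1 : ε ≤ 1) (x y : ℝ) :
    fv ε (x + y) ≤ fv ε x + fv ε y := by
  by_cases hx : x = 0
  · subst hx
    simp [fv_zero]
  by_cases hy : y = 0
  · subst hy
    simp [fv_zero]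
  rw [fv_ne ε hx, fv_ne ε hy]
  by_cases hxy : x + y = 0
  · rw [hxy, fv_zero]
    have := abs_nonneg x
    have := abs_nonneg y
    linarith
  · rw [fv_ne ε hxy]
    have := abs_add_le x y
    linarith

lemma gv_subadd {ε : ℝ} (hε0 : 0 < ε) (hε1 : ε ≤ 1) (x y : ℝ) :
    gv ε (x + y) ≤ gv ε x + gv ε y := by
  by_cases hx : x = 0
  · subst hx
    simp [gv_zero]
  by_cases hy : y = 0
  · subst hy
    simp [gv_zero]
  rcases lt_trichotomy (x + y) 0 with hs | hs | hs
  · -- x + y < 0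
    rw [gv_neg_eq ε hs]
    rcases lt_trichotomy x 0 with hx' | hx' | hx'
    · rcases lt_trichotomy y 0 with hy' | hy' | hy'
      · rw [gv_neg_eq ε hx', gv_neg_eq ε hy']
        rw [abs_of_neg hs, abs_of_neg hx', abs_of_neg hy']
        linarith
      · exact absurd hy' hy
      · rw [gv_neg_eq ε hx', gv_pos_eq ε hy']
        rw [abs_of_neg hs, abs_of_neg hx']
        linarith
    · exact absurd hx' hx
    · have hy' : y < 0 := by linarith
      rw [gv_pos_eq ε hx', gv_neg_eq ε hy']
      rw [abs_of_neg hs, abs_of_neg hy']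
      linarith
  · rw [hs, gv_zero]
    exact add_nonneg (gv_nonneg hε1 x) (gv_nonneg hε1 y)
  · -- 0 < x + y
    rw [gv_pos_eq ε hs]
    rcases lt_trichotomy x 0 with hx' | hx' | hx'
    · have hy' : 0 < y := by linarith
      rw [gv_neg_eq ε hx', gv_pos_eq ε hy']
      have := abs_nonneg x
      linarith
    · exact absurd hx' hx
    · rw [gv_pos_eq ε hx']
      have := gv_nonneg hε1 y
      linarith

lemma diff_bound {ε : ℝ} (hε0 : 0 < ε) (x : ℝ) : |x + gv ε x - fv ε x| ≤ ε := by
  rcases lt_trichotomy x 0 with hx | hx | hx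
  · have h1 : x + gv ε x - fv ε x = -ε := by
      rw [gv_neg_eq ε hx, fv_ne ε (ne_of_lt hx), abs_of_neg hx]
      ring
    rw [h1, abs_neg, abs_of_pos hε0]
  · subst hx
    simp [gv_zero, fv_zero]
    linarith
  · have h1 : x + gv ε x - fv ε x = ε := by
      rw [gv_pos_eq ε hx, fv_ne ε (ne_of_gt hx), abs_of_pos hx]
      ring
    rw [h1, abs_of_pos hε0]

lemma geom2Z : ∀ k : ℕ, (∑ j ∈ Finset.range k, (2 : ℤ) ^ j) = 2 ^ k - 1 := by
  intro k
  induction k with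
  | zero => simp
  | succ k ih =>
    rw [Finset.sum_range_succ, ih, pow_succ]
    ring

lemma sum_yA (n : ℕ) (S : Finset ℕ) : (∑ p ∈ S, yA n p) = RR n * S.card := by
  unfold yA
  rw [Finset.sum_const, nsmul_eq_mul, mul_comm]

lemma sum_yB (n : ℕ) (ε : ℝ) (S : Finset ℕ) :
    (∑ p ∈ S, yB n ε p) = RR n * S.card - dS n ε S := by
  unfold yB dS
  rw [Finset.sum_sub_distrib, Finset.sum_const, nsmul_eq_mul, mul_comm]

lemma exA (n : ℕ) (ε : ℝ) (S : Finset ℕ) :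
    (∑ p ∈ S, yA n p) - vA n ε S = fv ε (dS n ε S) := by
  rw [sum_yA]
  unfold vA
  ring

lemma exB (n : ℕ) (ε : ℝ) (S : Finset ℕ) :
    (∑ p ∈ S, yB n ε p) - vB n ε S = gv ε (dS n ε S) := by
  rw [sum_yB]
  unfold vB
  ring

lemma KK_PP (n : ℕ) : KK n (PP n) = 0 := by
  unfold KK PP
  have hsub : Finset.range (2 * n + 2) ⊆ Finset.range (8 * (n + 2) + 1) :=
    Finset.range_subset_range.mpr (by omega)
  rw [← Finset.sum_subset hsub (by
    intro x _ hx2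
    have hx : 2 * n + 2 ≤ x := by
      by_contra hc
      exact hx2 (Finset.mem_range.mpr (by omega))
    unfold cc
    rw [if_neg (by omega), if_neg (by omega)])]
  rw [Finset.range_eq_Ico, ← Finset.sum_Ico_consecutive _ (by omega : 0 ≤ n + 1)
    (by omega : n + 1 ≤ 2 * n + 2)]
  have h1 : (∑ p ∈ Finset.Ico 0 (n + 1), cc n p) = ∑ p ∈ Finset.range (n + 1), (2 : ℤ) ^ p := by
    rw [← Finset.range_eq_Ico]
    apply Finset.sum_congr rfl
    intro p hp
    have : p ≤ n := by
      have := Finset.mem_range.mp hp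
      omega
    unfold cc
    rw [if_pos this]
  have h2 : (∑ p ∈ Finset.Ico (n + 1) (2 * n + 2), cc n p)
      = ∑ k ∈ Finset.range (n + 1), (-(2 ^ k) : ℤ) := by
    rw [Finset.sum_Ico_eq_sum_range]
    have hc : 2 * n + 2 - (n + 1) = n + 1 := by omega
    rw [hc]
    apply Finset.sum_congr rfl
    intro k hk
    have hkn : k ≤ n := by
      have := Finset.mem_range.mp hk
      omega
    unfold cc
    rw [if_neg (by omega), if_pos (by omega)]
    congr 2
    omega
  rw [h1, h2, Finset.sum_neg_distrib]
  ring

lemma dS_PP (n : ℕ) (ε : ℝ) : dS n ε (PP n) = 0 := by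
  rw [dS_eq, KK_PP]
  simp

lemma absKK {n : ℕ} {S : Finset ℕ} (hS : S ⊆ PP n) : |KK n S| ≤ 2 ^ (n + 2) := by
  have h1 : |KK n S| ≤ ∑ p ∈ S, |cc n p| := Finset.abs_sum_le_sum_abs _ _
  have h2 : (∑ p ∈ S, |cc n p|) ≤ ∑ p ∈ PP n, |cc n p| :=
    Finset.sum_le_sum_of_subset_of_nonneg hS (fun p _ _ => abs_nonneg _)
  have h3 : (∑ p ∈ PP n, |cc n p|) ≤ 2 ^ (n + 2) := by
    unfold PP
    have hsub : Finset.range (2 * n + 2) ⊆ Finset.range (8 * (n + 2) + 1) :=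
      Finset.range_subset_range.mpr (by omega)
    rw [← Finset.sum_subset hsub (by
      intro x _ hx2
      have hx : 2 * n + 2 ≤ x := by
        by_contra hc
        exact hx2 (Finset.mem_range.mpr (by omega))
      unfold cc
      rw [if_neg (by omega), if_neg (by omega)]
      simp)]
    rw [Finset.range_eq_Ico, ← Finset.sum_Ico_consecutive _ (by omega : 0 ≤ n + 1)
      (by omega : n + 1 ≤ 2 * n + 2)]
    have h1' : (∑ p ∈ Finset.Ico 0 (n + 1), |cc n p|)
        = ∑ p ∈ Finset.range (n + 1), (2 : ℤ) ^ p := by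
      rw [← Finset.range_eq_Ico]
      apply Finset.sum_congr rfl
      intro p hp
      have hpn : p ≤ n := by
        have := Finset.mem_range.mp hp
        omega
      unfold cc
      rw [if_pos hpn]
      exact abs_of_nonneg (by positivity)
    have h2' : (∑ p ∈ Finset.Ico (n + 1) (2 * n + 2), |cc n p|)
        = ∑ k ∈ Finset.range (n + 1), (2 : ℤ) ^ k := by
      rw [Finset.sum_Ico_eq_sum_range]
      have hc : 2 * n + 2 - (n + 1) = n + 1 := by omega
      rw [hc]
      apply Finset.sum_congr rfl
      intro k hk
      have hkn : k ≤ n := by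
        have := Finset.mem_range.mp hk
        omega
      unfold cc
      rw [if_neg (by omega), if_pos (by omega)]
      rw [abs_neg]
      rw [abs_of_nonneg (by positivity)]
      congr 1
      omega
    rw [h1', h2', geom2Z]
    have : (2 : ℤ) ^ (n + 2) = 2 ^ (n + 1) * 2 := by
      rw [pow_succ]
    omega
  omega

lemma abs_dS_le {n : ℕ} {ε : ℝ} (hε0 : 0 < ε) (hε1 : ε ≤ 1) {S : Finset ℕ}
    (hS : S ⊆ PP n) : |dS n ε S| ≤ 2 ^ (n + 2) := by
  rw [dS_eq, abs_mul, abs_of_pos hε0, ← Int.cast_abs]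
  have h1 : ((|KK n S| : ℤ) : ℝ) ≤ ((2 ^ (n + 2) : ℤ) : ℝ) := by
    exact_mod_cast absKK hS
  have h2 : (0 : ℝ) ≤ ((|KK n S| : ℤ) : ℝ) := by
    exact_mod_cast abs_nonneg (KK n S)
  have h3 : ((2 ^ (n + 2) : ℤ) : ℝ) = 2 ^ (n + 2) := by push_cast; rfl
  nlinarith

lemma RR_eq (n : ℕ) : RR n = 4 * 2 ^ (n + 2) := by
  unfold RR
  rw [show n + 4 = (n + 2) + 2 by omega, pow_add]
  ring

lemma two_le_two_pow (n : ℕ) : (2 : ℝ) ≤ 2 ^ (n + 2) := by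
  calc (2 : ℝ) = 2 ^ 1 := by norm_num
  _ ≤ 2 ^ (n + 2) := by
      apply pow_le_pow_right₀ (by norm_num) (by omega)

lemma monoA {n : ℕ} {ε : ℝ} (hε0 : 0 < ε) (hε1 : ε ≤ 1) :
    ∀ S T : Finset ℕ, S ⊆ T → T ⊆ PP n → vA n ε S ≤ vA n ε T := by
  intro S T hST hTP
  rcases eq_or_lt_of_le (Finset.card_le_card hST) with hc | hc
  · have hSeq : S = T := Finset.eq_of_subset_of_card_le hST (le_of_eq hc.symm)
    subst hSeq
    exact le_refl _
  · unfold vA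
    have h1 : 0 ≤ fv ε (dS n ε S) := fv_nonneg hε1 _
    have h2 : fv ε (dS n ε T) ≤ 2 + |dS n ε T| := fv_le hε0 _
    have h3 : |dS n ε T| ≤ 2 ^ (n + 2) := abs_dS_le hε0 hε1 hTP
    have h4 : (S.card : ℝ) + 1 ≤ T.card := by exact_mod_cast hc
    have hRpos : (0 : ℝ) < RR n := by
      unfold RR
      positivity
    have h5 := mul_le_mul_of_nonneg_left h4 (le_of_lt hRpos)
    rw [mul_add, mul_one] at h5
    have h6 : 2 + (2 : ℝ) ^ (n + 2) ≤ RR n := by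
      rw [RR_eq]
      have := two_le_two_pow n
      linarith
    linarith

lemma monoB {n : ℕ} {ε : ℝ} (hε0 : 0 < ε) (hε1 : ε ≤ 1) :
    ∀ S T : Finset ℕ, S ⊆ T → T ⊆ PP n → vB n ε S ≤ vB n ε T := by
  intro S T hST hTP
  rcases eq_or_lt_of_le (Finset.card_le_card hST) with hc | hc
  · have hSeq : S = T := Finset.eq_of_subset_of_card_le hST (le_of_eq hc.symm)
    subst hSeq
    exact le_refl _
  · unfold vB
    have hsd : dS n ε T - dS n ε S = dS n ε (T \ S) := by
      have := Finset.sum_sdiff (f := dd n ε) hST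
      unfold dS
      linarith
    have hsdP : T \ S ⊆ PP n := fun x hx => hTP (Finset.sdiff_subset hx)
    have h0 : |dS n ε (T \ S)| ≤ 2 ^ (n + 2) := abs_dS_le hε0 hε1 hsdP
    have h1 : 0 ≤ gv ε (dS n ε S) := gv_nonneg hε1 _
    have h2 : gv ε (dS n ε T) ≤ 2 + 2 * |dS n ε T| := gv_le hε0 _
    have h3 : |dS n ε T| ≤ 2 ^ (n + 2) := abs_dS_le hε0 hε1 hTP
    have h4 : (S.card : ℝ) + 1 ≤ T.card := by exact_mod_cast hc
    have hRpos : (0 : ℝ) < RR n := by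
      unfold RR
      positivity
    have h5 := mul_le_mul_of_nonneg_left h4 (le_of_lt hRpos)
    rw [mul_add, mul_one] at h5
    have h6 : RR n = 4 * 2 ^ (n + 2) := RR_eq n
    have h7 := two_le_two_pow n
    have h8 : dS n ε T - dS n ε S ≤ 2 ^ (n + 2) := by
      rw [hsd]
      exact le_trans (le_abs_self _) h0
    linarith

lemma superA {n : ℕ} {ε : ℝ} (hε0 : 0 < ε) (hε1 : ε ≤ 1) :
    ∀ S T : Finset ℕ, Disjoint S T → vA n ε S + vA n ε T ≤ vA n ε (S ∪ T) := by
  intro S T hdis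
  unfold vA
  have hc : (((S ∪ T).card : ℕ) : ℝ) = (S.card : ℝ) + T.card := by
    rw [Finset.card_union_of_disjoint hdis]
    push_cast
    ring
  have hd : dS n ε (S ∪ T) = dS n ε S + dS n ε T := Finset.sum_union hdis
  have hsub := fv_subadd hε0 hε1 (dS n ε S) (dS n ε T)
  rw [← hd] at hsub
  rw [hc]
  have hring : RR n * ((S.card : ℝ) + T.card) = RR n * S.card + RR n * T.card := by ring
  linarith [hsub]

lemma superB {n : ℕ} {ε : ℝ} (hε0 : 0 < ε) (hε1 : ε ≤ 1) :
    ∀ S T : Finset ℕ, Disjoint S T → vB n ε S + vB n ε T ≤ vB n ε (S ∪ T) := by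
  intro S T hdis
  unfold vB
  have hc : (((S ∪ T).card : ℕ) : ℝ) = (S.card : ℝ) + T.card := by
    rw [Finset.card_union_of_disjoint hdis]
    push_cast
    ring
  have hd : dS n ε (S ∪ T) = dS n ε S + dS n ε T := Finset.sum_union hdis
  have hsub := gv_subadd hε0 hε1 (dS n ε S) (dS n ε T)
  rw [hc, hd]
  have hring : RR n * ((S.card : ℝ) + T.card) = RR n * S.card + RR n * T.card := by ring
  linarith [hsub]

lemma diffAB {n : ℕ} {ε : ℝ} (hε0 : 0 < ε) (S : Finset ℕ) :
    |vA n ε S - vB n ε S| ≤ ε := by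
  have h : vA n ε S - vB n ε S = dS n ε S + gv ε (dS n ε S) - fv ε (dS n ε S) := by
    unfold vA vB
    ring
  rw [h]
  exact diff_bound hε0 _

lemma vA_empty (n : ℕ) (ε : ℝ) : vA n ε ∅ = 0 := by
  unfold vA
  have : dS n ε ∅ = 0 := by
    unfold dS
    exact Finset.sum_empty
  rw [this, fv_zero]
  simp

lemma vB_empty (n : ℕ) (ε : ℝ) : vB n ε ∅ = 0 := by
  unfold vB
  have : dS n ε ∅ = 0 := by
    unfold dS
    exact Finset.sum_empty
  rw [this, gv_zero]
  simp

lemma sum_yA_PP (n : ℕ) (ε : ℝ) : (∑ p ∈ PP n, yA n p) = vA n ε (PP n) := by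
  rw [sum_yA]
  unfold vA
  rw [dS_PP, fv_zero]
  ring

lemma sum_yB_PP (n : ℕ) (ε : ℝ) : (∑ p ∈ PP n, yB n ε p) = vB n ε (PP n) := by
  rw [sum_yB]
  unfold vB
  rw [dS_PP, gv_zero]
  ring

lemma critA {n : ℕ} {ε : ℝ} (hε0 : 0 < ε) (hε1 : ε ≤ 1) :
    ∀ z : ℕ → ℝ, (∑ p ∈ PP n, z p) = (∑ p ∈ PP n, yA n p) → (∃ p ∈ PP n, z p ≠ yA n p) →
      ∃ S₀, S₀ ⊆ PP n ∧ (∑ p ∈ S₀, z p) < (∑ p ∈ S₀, yA n p) ∧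
        ∀ T, T ⊆ PP n → (∑ p ∈ T, z p) ≠ (∑ p ∈ T, yA n p) →
          (∑ p ∈ S₀, yA n p) - vA n ε S₀ ≤ (∑ p ∈ T, yA n p) - vA n ε T := by
  intro z hzsum hex
  obtain ⟨p, hpP, hpne⟩ := hex
  set D := (PP n).powerset.filter
    (fun T => (∑ q ∈ T, z q) ≠ (∑ q ∈ T, yA n q)) with hD
  have hDne : D.Nonempty := by
    refine ⟨{p}, Finset.mem_filter.mpr ⟨Finset.mem_powerset.mpr
      (Finset.singleton_subset_iff.mpr hpP), ?_⟩⟩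
    rw [Finset.sum_singleton, Finset.sum_singleton]
    exact hpne
  obtain ⟨S₁, hS₁D, hS₁min⟩ := Finset.exists_min_image D (fun T => fv ε (dS n ε T)) hDne
  have hS₁P : S₁ ⊆ PP n := Finset.mem_powerset.mp (Finset.mem_filter.mp hS₁D).1
  have hS₁ne : (∑ q ∈ S₁, z q) ≠ (∑ q ∈ S₁, yA n q) := (Finset.mem_filter.mp hS₁D).2
  rcases lt_or_gt_of_ne hS₁ne with hlt | hgt
  · refine ⟨S₁, hS₁P, hlt, ?_⟩
    intro T hTP hTne
    rw [exA, exA]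
    exact hS₁min T (Finset.mem_filter.mpr ⟨Finset.mem_powerset.mpr hTP, hTne⟩)
  · refine ⟨PP n \ S₁, Finset.sdiff_subset, ?_, ?_⟩
    · have h1 := Finset.sum_sdiff (f := z) hS₁P
      have h2 := Finset.sum_sdiff (f := yA n) hS₁P
      linarith
    · intro T hTP hTne
      rw [exA, exA]
      have hdc : dS n ε (PP n \ S₁) = -(dS n ε S₁) := by
        have h1 := Finset.sum_sdiff (f := dd n ε) hS₁P
        have h2 := dS_PP n ε
        unfold dS at h1 h2 ⊢
        linarith
      rw [hdc, fv_neg_arg]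
      exact hS₁min T (Finset.mem_filter.mpr ⟨Finset.mem_powerset.mpr hTP, hTne⟩)

lemma critB {n : ℕ} {ε : ℝ} (hε0 : 0 < ε) (hε1 : ε ≤ 1) :
    ∀ z : ℕ → ℝ, (∑ p ∈ PP n, z p) = (∑ p ∈ PP n, yB n ε p) →
      (∃ p ∈ PP n, z p ≠ yB n ε p) →
      ∃ S₀, S₀ ⊆ PP n ∧ (∑ p ∈ S₀, z p) < (∑ p ∈ S₀, yB n ε p) ∧
        ∀ T, T ⊆ PP n → (∑ p ∈ T, z p) ≠ (∑ p ∈ T, yB n ε p) →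
          (∑ p ∈ S₀, yB n ε p) - vB n ε S₀ ≤ (∑ p ∈ T, yB n ε p) - vB n ε T := by
  intro z hzsum hex
  by_cases hα : ∃ T, T ⊆ PP n ∧ dS n ε T = 0 ∧ (∑ q ∈ T, z q) ≠ (∑ q ∈ T, yB n ε q)
  · obtain ⟨T₀, hT₀P, hT₀d, hT₀ne⟩ := hα
    rcases lt_or_gt_of_ne hT₀ne with hlt | hgt
    · refine ⟨T₀, hT₀P, hlt, ?_⟩
      intro T hTP hTne
      rw [exB, exB, hT₀d, gv_zero]
      exact gv_nonneg hε1 _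
    · refine ⟨PP n \ T₀, Finset.sdiff_subset, ?_, ?_⟩
      · have h1 := Finset.sum_sdiff (f := z) hT₀P
        have h2 := Finset.sum_sdiff (f := yB n ε) hT₀P
        linarith
      · intro T hTP hTne
        rw [exB, exB]
        have hdc : dS n ε (PP n \ T₀) = -(dS n ε T₀) := by
          have h1 := Finset.sum_sdiff (f := dd n ε) hT₀P
          have h2 := dS_PP n ε
          unfold dS at h1 h2 ⊢
          linarith
        rw [hdc, hT₀d]
        rw [show -(0 : ℝ) = 0 by ring, gv_zero]
        exact gv_nonneg hε1 _
  · push_neg at hα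
    have hpair : ∀ k, k ≤ n → z (n + 1 + k) - yB n ε (n + 1 + k) = -(z k - yB n ε k) := by
      intro k hk
      have hne : k ≠ n + 1 + k := by omega
      have hmem : ({k, n + 1 + k} : Finset ℕ) ⊆ PP n := by
        intro x hx
        rcases Finset.mem_insert.mp hx with h | h
        · subst h
          exact Finset.mem_range.mpr (by omega)
        · rw [Finset.mem_singleton.mp h]
          exact Finset.mem_range.mpr (by omega)
      have hd : dS n ε {k, n + 1 + k} = 0 := by
        rw [dS_eq]
        have hKK0 : KK n {k, n + 1 + k} = 0 := by
          unfold KK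
          rw [Finset.sum_pair hne]
          unfold cc
          rw [if_pos hk, if_neg (by omega), if_pos (by omega)]
          rw [show n + 1 + k - (n + 1) = k from by omega]
          ring
        rw [hKK0]
        simp
      have hs := hα _ hmem hd
      rw [Finset.sum_pair hne, Finset.sum_pair hne] at hs
      linarith
    have hexk : ∃ k, k ≤ n ∧ z k ≠ yB n ε k := by
      obtain ⟨p, hpP, hpne⟩ := hex
      have hpm : p < 8 * (n + 2) + 1 := Finset.mem_range.mp hpP
      by_cases h1 : p ≤ n
      · exact ⟨p, h1, hpne⟩
      by_cases h2 : p ≤ 2 * n + 1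
      · refine ⟨p - (n + 1), by omega, ?_⟩
        have hp' := hpair (p - (n + 1)) (by omega)
        rw [show n + 1 + (p - (n + 1)) = p from by omega] at hp'
        intro hc
        rw [hc] at hp'
        apply hpne
        have : z p - yB n ε p = 0 := by rw [hp']; ring
        linarith
      · exfalso
        have hd : dS n ε {p} = 0 := by
          rw [dS_eq]
          have : KK n {p} = 0 := by
            unfold KK
            rw [Finset.sum_singleton]
            unfold cc
            rw [if_neg h1, if_neg h2]
          rw [this]
          simp
        have hmem : ({p} : Finset ℕ) ⊆ PP n :=
          Finset.singleton_subset_iff.mpr (Finset.mem_range.mpr hpm)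
        have := hα {p} hmem hd
        rw [Finset.sum_singleton, Finset.sum_singleton] at this
        exact hpne this
    by_cases hneg : ∃ k, k ≤ n ∧ z k - yB n ε k < 0
    · obtain ⟨k, hk, hku⟩ := hneg
      refine ⟨{k}, Finset.singleton_subset_iff.mpr (Finset.mem_range.mpr (by omega)), ?_, ?_⟩
      · rw [Finset.sum_singleton, Finset.sum_singleton]
        linarith
      · intro T hTP hTne
        rw [exB, exB]
        have hdk : dS n ε {k} = ε * 2 ^ k := by
          unfold dS dd
          rw [Finset.sum_singleton]
          unfold cc
          rw [if_pos hk]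
          push_cast
          ring
        have hgk : gv ε (dS n ε {k}) = 2 := by
          rw [hdk]
          exact gv_pos_eq ε (by positivity)
        rw [hgk]
        have hdT : dS n ε T ≠ 0 := fun h0 => hTne (hα T hTP h0)
        exact two_le_gv hε0 (eps_le_abs_dS hε0 hdT)
    · push_neg at hneg
      obtain ⟨k₀, hk₀, hk₀ne⟩ := hexk
      set U := (Finset.range (n + 1)).filter (fun k => z k ≠ yB n ε k) with hU
      have hUne : U.Nonempty :=
        ⟨k₀, Finset.mem_filter.mpr ⟨Finset.mem_range.mpr (by omega), hk₀ne⟩⟩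
      set ks := U.min' hUne with hks
      have hksU : ks ∈ U := Finset.min'_mem _ _
      have hksn : ks ≤ n := by
        have := (Finset.mem_filter.mp hksU).1
        have := Finset.mem_range.mp this
        omega
      have hksne : z ks ≠ yB n ε ks := (Finset.mem_filter.mp hksU).2
      have hkspos : 0 < z ks - yB n ε ks := by
        rcases lt_or_eq_of_le (hneg ks hksn) with h | h
        · exact h
        · exact absurd (by linarith : z ks = yB n ε ks) hksne
      set S₀ := insert (n + 1 + ks) (Finset.range ks) with hS₀
      have hnotmem : n + 1 + ks ∉ Finset.range ks := by
        rw [Finset.mem_range]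
        omega
      have hS₀P : S₀ ⊆ PP n := by
        intro x hx
        rcases Finset.mem_insert.mp hx with h | h
        · subst h
          exact Finset.mem_range.mpr (by omega)
        · have := Finset.mem_range.mp h
          exact Finset.mem_range.mpr (by omega)
      refine ⟨S₀, hS₀P, ?_, ?_⟩
      · have hsplit : (∑ q ∈ S₀, z q) - (∑ q ∈ S₀, yB n ε q)
            = (z (n + 1 + ks) - yB n ε (n + 1 + ks))
              + ∑ j ∈ Finset.range ks, (z j - yB n ε j) := by
          rw [hS₀, Finset.sum_insert hnotmem, Finset.sum_insert hnotmem,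
            Finset.sum_sub_distrib]
          ring
        have hzero : (∑ j ∈ Finset.range ks, (z j - yB n ε j)) = 0 := by
          apply Finset.sum_eq_zero
          intro j hj
          have hjk : j < ks := Finset.mem_range.mp hj
          have hzj : z j = yB n ε j := by
            by_contra hne
            have hjU : j ∈ U :=
              Finset.mem_filter.mpr ⟨Finset.mem_range.mpr (by omega), hne⟩
            have := Finset.min'_le U j hjU
            omega
          rw [hzj]
          ring
        have hbk := hpair ks hksn
        have hfin : (∑ q ∈ S₀, z q) - (∑ q ∈ S₀, yB n ε q) = -(z ks - yB n ε ks) := by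
          rw [hsplit, hzero, hbk]
          ring
        linarith
      · intro T hTP hTne
        rw [exB, exB]
        have hKKS₀ : KK n S₀ = -1 := by
          unfold KK
          rw [hS₀, Finset.sum_insert hnotmem]
          have h1 : cc n (n + 1 + ks) = -(2 ^ ks) := by
            unfold cc
            rw [if_neg (by omega), if_pos (by omega)]
            rw [show n + 1 + ks - (n + 1) = ks from by omega]
          have h2 : (∑ j ∈ Finset.range ks, cc n j) = 2 ^ ks - 1 := by
            rw [← geom2Z ks]
            apply Finset.sum_congr rfl
            intro j hj
            have := Finset.mem_range.mp hj
            unfold cc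
            rw [if_pos (by omega)]
          rw [h1, h2]
          ring
        have hdS₀ : dS n ε S₀ = -ε := by
          rw [dS_eq, hKKS₀]
          push_cast
          ring
        rw [hdS₀]
        have hgv : gv ε (-ε) = 2 := by
          rw [gv_neg_eq ε (by linarith : -ε < 0), abs_of_neg (by linarith : -ε < 0)]
          ring
        rw [hgv]
        have hdT : dS n ε T ≠ 0 := fun h0 => hTne (hα T hTP h0)
        exact two_le_gv hε0 (eps_le_abs_dS hε0 hdT)

end Stmt12

/-- Nucleolus instability. For every `n` and `0 < ε ≤ 1` there are monotone,
superadditive games `(P, v)` and `(P, ṽ)` on `8(n+2)+1` players whose value functions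
differ by at most `ε` on every coalition, yet whose nucleoli (the lexicographically
optimal allocations `y`, `ỹ`) differ by `2^n · ε` for some player. -/
theorem stmt12 (n : ℕ) (ε : ℝ) (hε0 : 0 < ε) (hε1 : ε ≤ 1) :
    ∃ (P : Finset ℕ) (v vt : Finset ℕ → ℝ) (y yt : ℕ → ℝ),
      P.card = 8 * (n + 2) + 1 ∧
      v ∅ = 0 ∧ vt ∅ = 0 ∧
      (∀ S T : Finset ℕ, S ⊆ T → T ⊆ P → v S ≤ v T) ∧
      (∀ S T : Finset ℕ, S ⊆ T → T ⊆ P → vt S ≤ vt T) ∧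
      (∀ S T : Finset ℕ, S ⊆ P → T ⊆ P → Disjoint S T → v S + v T ≤ v (S ∪ T)) ∧
      (∀ S T : Finset ℕ, S ⊆ P → T ⊆ P → Disjoint S T → vt S + vt T ≤ vt (S ∪ T)) ∧
      (∀ S ⊆ P, |v S - vt S| ≤ ε) ∧
      (∑ p ∈ P, y p) = v P ∧ (∑ p ∈ P, yt p) = vt P ∧
      (∀ z : ℕ → ℝ, (∑ p ∈ P, z p) = v P →
        lexLE (excessListOn P v z) (excessListOn P v y)) ∧
      (∀ z : ℕ → ℝ, (∑ p ∈ P, z p) = vt P →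
        lexLE (excessListOn P vt z) (excessListOn P vt yt)) ∧
      ∃ p ∈ P, |y p - yt p| = 2 ^ n * ε := by
  refine ⟨Stmt12.PP n, Stmt12.vA n ε, Stmt12.vB n ε, Stmt12.yA n, Stmt12.yB n ε,
    ?_, ?_, ?_, ?_, ?_, ?_, ?_, ?_, ?_, ?_, ?_, ?_, ?_⟩
  · simp [Stmt12.PP]
  · exact Stmt12.vA_empty n ε
  · exact Stmt12.vB_empty n ε
  · intro S T hST hTP
    exact Stmt12.monoA hε0 hε1 S T hST hTP
  · intro S T hST hTP
    exact Stmt12.monoB hε0 hε1 S T hST hTP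
  · intro S T _ _ hdis
    exact Stmt12.superA hε0 hε1 S T hdis
  · intro S T _ _ hdis
    exact Stmt12.superB hε0 hε1 S T hdis
  · intro S _
    exact Stmt12.diffAB hε0 S
  · exact (Stmt12.sum_yA_PP n ε)
  · exact (Stmt12.sum_yB_PP n ε)
  · exact Stmt12.opt _ _ _ (Stmt12.critA hε0 hε1) (Stmt12.sum_yA_PP n ε)
  · exact Stmt12.opt _ _ _ (Stmt12.critB hε0 hε1) (Stmt12.sum_yB_PP n ε)
  · refine ⟨n, Finset.mem_range.mpr (by omega), ?_⟩
    have h1 : Stmt12.yA n n - Stmt12.yB n ε n = ε * 2 ^ n := by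
      unfold Stmt12.yA Stmt12.yB Stmt12.dd Stmt12.cc
      rw [if_pos (le_refl n)]
      push_cast
      ring
    rw [h1, abs_of_pos (by positivity)]
    ring
end
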